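/- At any minimizer (α̂, β̂, τ̂) of the adaptive BerHu penalized least squares with β̂ ≠ 0 (hence τ̂ > 0), the stationarity condition in τ reads: Σ_{j : |β̂ⱼ| > Lτ̂} ŵⱼ·( (β̂ⱼ/τ̂)²/(2L) − L/2 ) = Σ_{j=1}^p 1/ŵⱼ. In particular, the set G = {j : |β̂ⱼ| > Lτ̂} is non-empty. -/

import Mathlib

noncomputable def berhu (L z : ℝ) : ℝ := if |z| ≤ L then |z| else (z ^ 2 + L ^ 2) / (2 * L)

noncomputable def berhuObj {n p : ℕ} (y : Fin n → ℝ) (X : Matrix (Fin n) (Fin p) ℝ)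
    (lam L : ℝ) (w : Fin p → ℝ) (α : ℝ) (β : Fin p → ℝ) (τ : ℝ) : ℝ :=
  (∑ i, (y i - α - ∑ j, X i j * β j) ^ 2) +
    lam * (τ * ((∑ j, 1 / w j) + ∑ j, w j * berhu L (β j / τ)))

-- derivative of quadratic branch q τ = (b^2 * τ⁻¹ + L^2 * τ) / (2*L)
lemma hasDerivAt_q (L b τ0 : ℝ) (hτ : 0 < τ0) :
    HasDerivAt (fun τ : ℝ => (b ^ 2 * τ⁻¹ + L ^ 2 * τ) / (2 * L))
      ((L ^ 2 - b ^ 2 / τ0 ^ 2) / (2 * L)) τ0 := by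
  have h1 : HasDerivAt (fun τ : ℝ => b ^ 2 * τ⁻¹ + L ^ 2 * τ)
      (b ^ 2 * (-(τ0 ^ 2)⁻¹) + L ^ 2 * 1) τ0 :=
    ((hasDerivAt_inv hτ.ne').const_mul (b ^ 2)).add ((hasDerivAt_id τ0).const_mul (L ^ 2))
  have := h1.div_const (2 * L)
  exact this.congr_deriv (by ring)

lemma key (L : ℝ) (hL : 0 < L) (b τ0 : ℝ) (hτ : 0 < τ0) :
    HasDerivAt (fun τ => τ * berhu L (b / τ))
      (if |b| ≤ L * τ0 then 0 else (L ^ 2 - b ^ 2 / τ0 ^ 2) / (2 * L)) τ0 := by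
  have hq := hasDerivAt_q L b τ0 hτ
  have habs : ∀ τ : ℝ, 0 < τ → |b / τ| = |b| / τ := by
    intro τ hτ'
    rw [abs_div, abs_of_pos hτ']
  have heqq : ∀ τ : ℝ, 0 < τ → L * τ < |b| →
      τ * berhu L (b / τ) = (b ^ 2 * τ⁻¹ + L ^ 2 * τ) / (2 * L) := by
    intro τ hτ' hlt
    have : ¬ |b / τ| ≤ L := by
      rw [habs τ hτ', not_le, lt_div_iff₀ hτ']
      linarith [hlt]
    rw [berhu, if_neg this]
    field_simp
  have heqc : ∀ τ : ℝ, 0 < τ → |b| ≤ L * τ → τ * berhu L (b / τ) = |b| := by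
    intro τ hτ' hle
    have : |b / τ| ≤ L := by
      rw [habs τ hτ', div_le_iff₀ hτ']
      linarith [hle]
    rw [berhu, if_pos this]
    rw [habs τ hτ']
    field_simp
  rcases lt_trichotomy (L * τ0) (|b|) with h | h | h
  · rw [if_neg (not_le.mpr h)]
    refine hq.congr_of_eventuallyEq ?_
    have hs : {τ : ℝ | 0 < τ ∧ L * τ < |b|} ∈ nhds τ0 := by
      have : IsOpen {τ : ℝ | 0 < τ ∧ L * τ < |b|} := by
        apply IsOpen.inter (isOpen_lt continuous_const continuous_id)
        exact isOpen_lt (continuous_const.mul continuous_id) continuous_const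
      exact this.mem_nhds ⟨hτ, h⟩
    filter_upwards [hs] with τ hτs
    exact heqq τ hτs.1 hτs.2
  · -- boundary case |b| = L * τ0 ; derivative is 0 either way
    have hb2 : b ^ 2 = L ^ 2 * τ0 ^ 2 := by
      have : |b| ^ 2 = (L * τ0) ^ 2 := by rw [h]
      rw [sq_abs] at this
      rw [this]; ring
    have hval : (L ^ 2 - b ^ 2 / τ0 ^ 2) / (2 * L) = 0 := by
      rw [hb2]
      field_simp
      ring
    rw [if_pos h.ge]
    -- derivative 0 via union of Ici and Iic ∩ Ioi 0
    have hIci : HasDerivWithinAt (fun τ => τ * berhu L (b / τ)) 0 (Set.Ici τ0) τ0 := by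
      have hc : HasDerivWithinAt (fun _ : ℝ => |b|) 0 (Set.Ici τ0) τ0 :=
        (hasDerivAt_const τ0 (|b|)).hasDerivWithinAt
    
      refine hc.congr ?_ ?_
      · intro τ hτs
        have hle : τ0 ≤ τ := hτs
        refine heqc τ (hτ.trans_le hle) ?_
        rw [← h]
        exact mul_le_mul_of_nonneg_left hle hL.le
      · exact heqc τ0 hτ h.ge
    have hIic : HasDerivWithinAt (fun τ => τ * berhu L (b / τ)) 0
        (Set.Iic τ0 ∩ Set.Ioi 0) τ0 := by
      have hq0 : HasDerivWithinAt (fun τ : ℝ => (b ^ 2 * τ⁻¹ + L ^ 2 * τ) / (2 * L)) 0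
          (Set.Iic τ0 ∩ Set.Ioi 0) τ0 := by
        have := hq.hasDerivWithinAt (s := Set.Iic τ0 ∩ Set.Ioi 0)
        rwa [hval] at this
      have hqv : (b ^ 2 * τ0⁻¹ + L ^ 2 * τ0) / (2 * L) = |b| := by
        rw [hb2, ← h]
        field_simp
        ring
      refine hq0.congr ?_ ?_
      · intro τ hτs
        have hle : τ ≤ τ0 := hτs.1
        have hpos : (0:ℝ) < τ := hτs.2
        rcases eq_or_lt_of_le hle with rfl | hlt
        · rw [heqc τ hpos h.ge, hqv]
        · refine heqq τ hpos ?_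
          rw [← h]
          exact mul_lt_mul_of_pos_left hlt hL
      · rw [heqc τ0 hτ h.ge, hqv]
    have hu := hIci.union hIic
    refine hu.hasDerivAt ?_
    have : Set.Ioi (0 : ℝ) ∈ nhds τ0 := (isOpen_Ioi).mem_nhds hτ
    filter_upwards [this] with τ hτs
    rcases le_total τ0 τ with hle | hle
    · exact Or.inl hle
    · exact Or.inr ⟨hle, hτs⟩
  · rw [if_pos h.le]
    refine (hasDerivAt_const τ0 (|b|)).congr_of_eventuallyEq ?_
    have hs : {τ : ℝ | 0 < τ ∧ |b| < L * τ} ∈ nhds τ0 := by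
      have : IsOpen {τ : ℝ | 0 < τ ∧ |b| < L * τ} := by
        apply IsOpen.inter (isOpen_lt continuous_const continuous_id)
        exact isOpen_lt continuous_const (continuous_const.mul continuous_id)
      exact this.mem_nhds ⟨hτ, h⟩
    filter_upwards [hs] with τ hτs
    exact heqc τ hτs.1 hτs.2.le

theorem berhu_tau_stationarity {n p : ℕ} (y : Fin n → ℝ) (X : Matrix (Fin n) (Fin p) ℝ)
    (lam L : ℝ) (hlam : 0 < lam) (hL : 0 < L) (w : Fin p → ℝ) (hw : ∀ j, 0 < w j)
    (αhat : ℝ) (βhat : Fin p → ℝ) (hβ : βhat ≠ 0) (τhat : ℝ) (hτ : 0 < τhat)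
    (hmin : ∀ (α : ℝ) (β : Fin p → ℝ) (τ : ℝ), 0 < τ →
      berhuObj y X lam L w αhat βhat τhat ≤ berhuObj y X lam L w α β τ) :
    (∑ j ∈ Finset.univ.filter (fun j : Fin p => L * τhat < |βhat j|),
        w j * ((βhat j / τhat) ^ 2 / (2 * L) - L / 2)) = (∑ j, 1 / w j) ∧
      (Finset.univ.filter (fun j : Fin p => L * τhat < |βhat j|)).Nonempty := by
  set S : ℝ := ∑ j, 1 / w j with hS
  set h : Fin p → ℝ := fun j =>
    if |βhat j| ≤ L * τhat then 0 else (L ^ 2 - (βhat j) ^ 2 / τhat ^ 2) / (2 * L) with hh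
  -- derivative of the objective in τ
  have hderiv : HasDerivAt (fun τ => berhuObj y X lam L w αhat βhat τ)
      (lam * (S + ∑ j, w j * h j)) τhat := by
    have hsum : HasDerivAt (fun τ => ∑ j, w j * (τ * berhu L (βhat j / τ)))
        (∑ j, w j * h j) τhat := by
      apply HasDerivAt.fun_sum
      intro j _
      exact (key L hL (βhat j) τhat hτ).const_mul (w j)
    have h2 : HasDerivAt (fun τ => τ * S + ∑ j, w j * (τ * berhu L (βhat j / τ)))
        (S + ∑ j, w j * h j) τhat := by
      have := ((hasDerivAt_id τhat).mul_const S).add hsum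
      exact this.congr_deriv (by ring)
    have h3 := (h2.const_mul lam).const_add (∑ i, (y i - αhat - ∑ j, X i j * βhat j) ^ 2)
    have hfun : ∀ τ : ℝ, berhuObj y X lam L w αhat βhat τ =
        (∑ i, (y i - αhat - ∑ j, X i j * βhat j) ^ 2) +
          lam * (τ * S + ∑ j, w j * (τ * berhu L (βhat j / τ))) := by
      intro τ
      have hms : ∑ j, w j * (τ * berhu L (βhat j / τ)) =
          τ * ∑ j, w j * berhu L (βhat j / τ) := by
        rw [Finset.mul_sum]
        exact Finset.sum_congr rfl fun j _ => by ring
      simp only [berhuObj, hS, hms]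
      ring
    exact h3.congr_of_eventuallyEq (Filter.Eventually.of_forall hfun)
  -- local min ⇒ derivative zero
  have hlocmin : IsLocalMin (fun τ => berhuObj y X lam L w αhat βhat τ) τhat := by
    have : Set.Ioi (0 : ℝ) ∈ nhds τhat := isOpen_Ioi.mem_nhds hτ
    filter_upwards [this] with τ hτ'
    exact hmin αhat βhat τ hτ'
  have hzero := hlocmin.hasDerivAt_eq_zero hderiv
  have hkey : S + ∑ j, w j * h j = 0 := by
    have := mul_eq_zero.mp hzero
    rcases this with h' | h'
    · exact absurd h' (ne_of_gt hlam)
    · exact h'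
  -- rewrite the sum
  have hsum_eq : ∑ j, w j * h j =
      -(∑ j ∈ Finset.univ.filter (fun j : Fin p => L * τhat < |βhat j|),
        w j * ((βhat j / τhat) ^ 2 / (2 * L) - L / 2)) := by
    rw [← Finset.sum_neg_distrib]
    rw [← Finset.sum_filter_add_sum_filter_not Finset.univ
      (fun j : Fin p => L * τhat < |βhat j|) (fun j => w j * h j)]
    have h1 : ∀ j ∈ Finset.univ.filter (fun j : Fin p => ¬ L * τhat < |βhat j|),
        w j * h j = 0 := by
      intro j hj
      simp only [Finset.mem_filter, not_lt] at hj
      simp [hh, hj.2]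
    rw [Finset.sum_eq_zero h1, add_zero]
    apply Finset.sum_congr rfl
    intro j hj
    simp only [Finset.mem_filter] at hj
    rw [hh]
    simp only
    rw [if_neg (not_le.mpr hj.2)]
    rw [div_pow]
    field_simp
    ring
  have hmain : (∑ j ∈ Finset.univ.filter (fun j : Fin p => L * τhat < |βhat j|),
      w j * ((βhat j / τhat) ^ 2 / (2 * L) - L / 2)) = S := by
    rw [hsum_eq] at hkey
    linarith
  refine ⟨hmain, ?_⟩
  -- nonemptiness
  by_contra hne
  rw [Finset.not_nonempty_iff_eq_empty] at hne
  rw [hne, Finset.sum_empty] at hmain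
  have hp : 0 < p := by
    rcases Nat.eq_zero_or_pos p with rfl | hp
    · exact absurd (funext fun j => absurd j.2 (by omega) : βhat = 0) hβ
    · exact hp
  have hSpos : 0 < S := by
    rw [hS]
    apply Finset.sum_pos
    · intro j _
      exact one_div_pos.mpr (hw j)
    · exact ⟨⟨0, hp⟩, Finset.mem_univ _⟩
  linarith
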